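/- For δ > 0 and 0 < ε < 1, let n_p = ⌈√(log(1/ε))/(π√δ)⌉. Then for all real x, |∑_{m∈ℤ} e^{-(x+m)²/δ} − √(πδ) ∑_{n=-n_p}^{n_p} e^{-(π√δ n)²} e^{i2πnx}| ≤ 2√(πδ) e^{-(π√δ(n_p+1))²}/(1 − e^{-(π√δ)²(2n_p+3)}) and in particular this error is O(ε) (bounded by Cε for a constant C depending only on δ being bounded). -/

import Mathlib

open Complex in
/-- Truncation error of the Fourier series of the periodic Gaussian: with
`n_p = ⌈√(log(1/ε))/(π√δ)⌉`, for all real `x`,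
`|∑_{m∈ℤ} e^{-(x+m)²/δ} - √(πδ) ∑_{n=-n_p}^{n_p} e^{-(π√δ n)²} e^{i2πnx}|
  ≤ 2√(πδ) e^{-(π√δ(n_p+1))²} / (1 - e^{-(π√δ)²(2n_p+3)})`. -/
theorem periodic_gaussian_truncation (δ ε x : ℝ) (np : ℕ)
    (hδ : 0 < δ) (hε1 : 0 < ε) (hε2 : ε < 1)
    (hnp : np = ⌈Real.sqrt (Real.log (1 / ε)) / (Real.pi * Real.sqrt δ)⌉₊) :
    ‖((∑' m : ℤ, (Real.exp (-(x + (m : ℝ)) ^ 2 / δ) : ℂ)) -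
        (Real.sqrt (Real.pi * δ) : ℂ) *
          ∑ n ∈ Finset.Icc (-(np : ℤ)) (np : ℤ),
            (Real.exp (-(Real.pi * Real.sqrt δ * (n : ℝ)) ^ 2) : ℂ) *
              Complex.exp (Complex.I * 2 * Real.pi * (n : ℝ) * x))‖ ≤
      2 * Real.sqrt (Real.pi * δ) *
          Real.exp (-(Real.pi * Real.sqrt δ * ((np : ℝ) + 1)) ^ 2) /
        (1 - Real.exp (-(Real.pi * Real.sqrt δ) ^ 2 * (2 * (np : ℝ) + 3))) := by
  clear hnp hε1 hε2
  have hπ : (0:ℝ) < Real.pi := Real.pi_pos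
  have hs : (0:ℝ) < Real.sqrt δ := Real.sqrt_pos.mpr hδ
  set p : ℝ := Real.pi * Real.sqrt δ with hp
  have hp0 : 0 < p := mul_pos hπ hs
  set c : ℝ := p ^ 2 with hcdef
  have hc : 0 < c := pow_pos hp0 2
  set r : ℝ := Real.exp (-c * (2 * (np:ℝ) + 3)) with hrdef
  have hr0 : 0 < r := Real.exp_pos _
  have hr1 : r < 1 := by
    rw [hrdef, Real.exp_lt_one_iff]
    nlinarith [Nat.cast_nonneg (α := ℝ) np]
  have h1r : 0 < 1 - r := by linarith
  set E : ℝ := Real.exp (-(p * ((np:ℝ) + 1)) ^ 2) with hEdef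
  have hE0 : 0 < E := Real.exp_pos _
  -- the Fourier coefficient function
  set f : ℤ → ℂ := fun n =>
    (Real.exp (-(p * (n : ℝ)) ^ 2) : ℂ) *
      Complex.exp (Complex.I * 2 * Real.pi * (n : ℝ) * x) with hfdef
  set F : ℤ → ℝ := fun n => Real.exp (-c * (n:ℝ) ^ 2) with hFdef
  have hF : ∀ n : ℤ, Real.exp (-(p * (n : ℝ)) ^ 2) = F n := by
    intro n; simp only [hFdef, mul_pow, neg_mul, hcdef]
  -- geometric bound
  have hbound : ∀ j : ℕ, Real.exp (-c * ((np:ℝ) + 1 + j) ^ 2) ≤ E * r ^ j := by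
    intro j
    have hj : (j:ℝ) ≤ (j:ℝ) ^ 2 := by
      exact_mod_cast Nat.le_self_pow two_ne_zero j
    have he : E * r ^ j
        = Real.exp (-(p * ((np:ℝ) + 1)) ^ 2 + (j:ℝ) * (-c * (2 * (np:ℝ) + 3))) := by
      rw [Real.exp_add, Real.exp_nat_mul]
    rw [he, Real.exp_le_exp]
    have hcj : 0 ≤ c * ((j:ℝ)^2 - (j:ℝ)) := mul_nonneg hc.le (by linarith)
    nlinarith [hcj]
  -- summability
  have hnat : Summable (fun k : ℕ => Real.exp (-c * (k:ℝ) ^ 2)) := by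
    refine Summable.of_nonneg_of_le (fun k => (Real.exp_pos _).le) (fun k => ?_)
      (summable_geometric_of_lt_one (Real.exp_pos (-c)).le
        (by rw [Real.exp_lt_one_iff]; linarith))
    rw [← Real.exp_nat_mul, Real.exp_le_exp]
    have hk : (k:ℝ) ≤ (k:ℝ) ^ 2 := by exact_mod_cast Nat.le_self_pow two_ne_zero k
    nlinarith [hc]
  have hFs : Summable F := by
    refine Summable.of_nat_of_neg (by simpa [hFdef] using hnat) ?_
    simpa [hFdef] using hnat
  have hnorm : ∀ n : ℤ, ‖f n‖ = F n := by
    intro n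
    rw [hfdef]
    simp only [norm_mul, Complex.norm_real, Real.norm_eq_abs, Complex.norm_exp]
    have h0 : (Complex.I * 2 * (Real.pi:ℂ) * ((n:ℝ):ℂ) * (x:ℂ)).re = 0 := by
      simp [Complex.mul_re, Complex.mul_im]
    rw [h0, Real.exp_zero, mul_one, abs_of_pos (Real.exp_pos _), hF]
  have hfs : Summable f := by
    refine Summable.of_norm ?_
    simpa only [hnorm] using hFs
  -- nonvanishing facts
  have hπ' : (Real.pi : ℂ) ≠ 0 := Complex.ofReal_ne_zero.mpr hπ.ne'
  have hδ' : (δ : ℂ) ≠ 0 := Complex.ofReal_ne_zero.mpr hδ.ne'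
  have hsqps : 0 < Real.sqrt (Real.pi * δ) := Real.sqrt_pos.mpr (mul_pos hπ hδ)
  have h0 : (Real.sqrt (Real.pi * δ) : ℂ) ≠ 0 := Complex.ofReal_ne_zero.mpr hsqps.ne'
  -- Poisson summation identity
  have ha : (0:ℝ) < (((Real.pi * δ : ℝ) : ℂ)).re := by
    simpa using mul_pos hπ hδ
  have key := Complex.tsum_exp_neg_quadratic ha (Complex.I * (x:ℂ))
  have hsq : ((Real.sqrt δ : ℝ) : ℂ) ^ 2 = (δ : ℂ) := by
    rw [← Complex.ofReal_pow, Real.sq_sqrt hδ.le]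
  have hLHS : (∑' n : ℤ, Complex.exp (-(Real.pi:ℂ) * ((Real.pi * δ : ℝ):ℂ) * (n:ℂ) ^ 2
      + 2 * (Real.pi:ℂ) * (Complex.I * (x:ℂ)) * (n:ℂ))) = ∑' n : ℤ, f n := by
    refine tsum_congr fun n => ?_
    rw [hfdef]
    dsimp only
    have : ((Real.exp (-(p * (n : ℝ)) ^ 2) : ℝ) : ℂ)
        = Complex.exp (((-(p * (n : ℝ)) ^ 2 : ℝ) : ℂ)) := by
      rw [Complex.ofReal_exp]
    rw [this, ← Complex.exp_add]
    congr 1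
    rw [hp]
    push_cast
    linear_combination ((Real.pi:ℂ)^2 * (n:ℂ)^2) * hsq
  have hRHS : (∑' n : ℤ, Complex.exp (-(Real.pi:ℂ) / ((Real.pi * δ : ℝ):ℂ)
      * ((n:ℂ) + Complex.I * (Complex.I * (x:ℂ))) ^ 2))
      = ∑' m : ℤ, ((Real.exp (-(x + (m : ℝ)) ^ 2 / δ) : ℝ) : ℂ) := by
    rw [← (Equiv.neg ℤ).tsum_eq (fun m : ℤ => ((Real.exp (-(x + (m : ℝ)) ^ 2 / δ) : ℝ) : ℂ))]
    refine tsum_congr fun n => ?_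
    simp only [Equiv.neg_apply]
    rw [Complex.ofReal_exp, ← mul_assoc, Complex.I_mul_I]
    congr 1
    push_cast
    field_simp
    ring
  have hpow : (((Real.pi * δ : ℝ) : ℂ)) ^ ((1:ℂ)/2) = ((Real.sqrt (Real.pi * δ) : ℝ) : ℂ) := by
    rw [Real.sqrt_eq_rpow, Complex.ofReal_cpow (mul_pos hπ hδ).le]
    norm_num
  rw [hLHS, hRHS, hpow] at key
  have key2 : (∑' m : ℤ, ((Real.exp (-(x + (m : ℝ)) ^ 2 / δ) : ℝ) : ℂ))
      = ((Real.sqrt (Real.pi * δ) : ℝ) : ℂ) * ∑' n : ℤ, f n := by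
    rw [key, one_div, ← mul_assoc, mul_inv_cancel₀ h0, one_mul]
  -- split off the truncated sum
  have split := Summable.sum_add_tsum_compl (s := Finset.Icc (-(np:ℤ)) (np:ℤ)) hfs
  set S : Set ℤ := (↑(Finset.Icc (-(np:ℤ)) (np:ℤ)) : Set ℤ)ᶜ with hSdef
  rw [key2, ← mul_sub, ← split, add_sub_cancel_left, norm_mul, Complex.norm_real, Real.norm_eq_abs,
    _root_.abs_of_nonneg (Real.sqrt_nonneg _)]
  -- bound the tail
  set G : ℤ → ℝ := S.indicator F with hGdef
  have hGs : Summable G := hFs.indicator S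
  have hGnat : Summable (fun k : ℕ => G (k:ℤ)) :=
    hGs.comp_injective (fun a b h => by exact_mod_cast h)
  have hGneg : Summable (fun k : ℕ => G (-((k:ℤ)+1))) :=
    hGs.comp_injective (fun a b h => by omega)
  have hmem : ∀ n : ℤ, ((np:ℤ) < n ∨ n < -(np:ℤ)) → n ∈ S := by
    intro n hn
    simp only [hSdef, Set.mem_compl_iff, Finset.coe_Icc, Set.mem_Icc, not_and_or, not_le]
    omega
  have hnotmem : ∀ n : ℤ, -(np:ℤ) ≤ n → n ≤ (np:ℤ) → G n = 0 := by
    intro n h1 h2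
    refine Set.indicator_of_notMem ?_ _
    simp only [hSdef, Set.mem_compl_iff, Finset.coe_Icc, Set.mem_Icc, not_not]
    exact ⟨h1, h2⟩
  have hgeo : HasSum (fun j : ℕ => E * r ^ j) (E * (1 - r)⁻¹) :=
    (hasSum_geometric_of_lt_one hr0.le hr1).mul_left E
  have partA : (∑' k : ℕ, G (k:ℤ)) ≤ E * (1 - r)⁻¹ := by
    have hA : Summable (fun j : ℕ => G ((np + 1 + j : ℕ) : ℤ)) :=
      hGnat.comp_injective (add_right_injective _)
    have hshift : (∑' j : ℕ, G ((np + 1 + j : ℕ) : ℤ)) = ∑' k : ℕ, G (k:ℤ) := by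
      refine Function.Injective.tsum_eq (f := fun k : ℕ => G (k:ℤ))
        (g := fun j : ℕ => np + 1 + j) (add_right_injective _) ?_
      intro k hk
      rcases le_or_gt k np with h | h
      · exact absurd (hnotmem _ (by omega) (by exact_mod_cast h))
          (Function.mem_support.mp hk)
      · exact ⟨k - (np+1), show np + 1 + (k - (np+1)) = k by omega⟩
    rw [← hshift]
    refine le_trans (Summable.tsum_le_tsum (fun j => ?_) hA hgeo.summable) (le_of_eq hgeo.tsum_eq)
    · have hmem' : ((np + 1 + j : ℕ) : ℤ) ∈ S := hmem _ (Or.inl (by push_cast; omega))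
      have : G ((np + 1 + j : ℕ) : ℤ) = F ((np + 1 + j : ℕ) : ℤ) :=
        Set.indicator_of_mem hmem' _
      rw [this]
      have he : F ((np + 1 + j : ℕ) : ℤ) = Real.exp (-c * ((np:ℝ) + 1 + j) ^ 2) := by
        simp only [hFdef]
        congr 1
        push_cast; ring
      rw [he]
      exact hbound j
  have partB : (∑' k : ℕ, G (-((k:ℤ)+1))) ≤ E * (1 - r)⁻¹ := by
    have hB : Summable (fun j : ℕ => G (-((((np + j : ℕ)):ℤ) + 1))) :=
      hGneg.comp_injective (add_right_injective _)
    have hshift : (∑' j : ℕ, G (-((((np + j : ℕ)):ℤ) + 1))) =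
        ∑' k : ℕ, G (-((k:ℤ)+1)) := by
      refine Function.Injective.tsum_eq (f := fun k : ℕ => G (-((k:ℤ)+1)))
        (g := fun j : ℕ => np + j) (add_right_injective _) ?_
      intro k hk
      rcases lt_or_ge k np with h | h
      · exact absurd (hnotmem _ (by omega) (by omega)) (Function.mem_support.mp hk)
      · exact ⟨k - np, show np + (k - np) = k by omega⟩
    rw [← hshift]
    refine le_trans (Summable.tsum_le_tsum (fun j => ?_) hB hgeo.summable) (le_of_eq hgeo.tsum_eq)
    · have hmem' : (-((((np + j : ℕ)):ℤ) + 1)) ∈ S := hmem _ (Or.inr (by push_cast; omega))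
      have : G (-((((np + j : ℕ)):ℤ) + 1)) = F (-((((np + j : ℕ)):ℤ) + 1)) :=
        Set.indicator_of_mem hmem' _
      rw [this]
      have he : F (-((((np + j : ℕ)):ℤ) + 1)) = Real.exp (-c * ((np:ℝ) + 1 + j) ^ 2) := by
        simp only [hFdef]
        congr 1
        push_cast; ring
      rw [he]
      exact hbound j
  have htail : ‖∑' n : S, f n‖ ≤ 2 * E * (1 - r)⁻¹ := by
    have h1 : ‖∑' n : S, f n‖ ≤ ∑' n : S, F n := by
      refine (norm_tsum_le_tsum_norm ?_).trans_eq ?_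
      · exact (hFs.subtype _).congr fun n => by rw [hnorm]; rfl
      · exact tsum_congr fun n => by rw [hnorm]
    have h2 : (∑' n : S, F n) = ∑' n : ℤ, G n := tsum_subtype S F
    have h3 : (∑' n : ℤ, G n) = (∑' k : ℕ, G (k:ℤ)) + ∑' k : ℕ, G (-((k:ℤ)+1)) :=
      tsum_of_nat_of_neg_add_one hGnat hGneg
    calc ‖∑' n : S, f n‖ ≤ ∑' n : S, F n := h1
      _ = (∑' k : ℕ, G (k:ℤ)) + ∑' k : ℕ, G (-((k:ℤ)+1)) := by rw [h2, h3]
      _ ≤ E * (1 - r)⁻¹ + E * (1 - r)⁻¹ := add_le_add partA partB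
      _ = 2 * E * (1 - r)⁻¹ := by ring
  calc Real.sqrt (Real.pi * δ) * ‖∑' n : S, f n‖
      ≤ Real.sqrt (Real.pi * δ) * (2 * E * (1 - r)⁻¹) :=
        mul_le_mul_of_nonneg_left htail (Real.sqrt_nonneg _)
    _ = 2 * Real.sqrt (Real.pi * δ) * E / (1 - r) := by
        rw [div_eq_mul_inv]; ring
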